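/- Elementary lower barrier for the discrete maximal sum: let 0 < λ ≤ 1 and L > 1/λ, let j ∈ ℕ₀, and let (λ_u)_{u∈ℤ} be a finitely supported sequence of nonnegative reals. Then for every x ∈ ℝ, ∑_{u∈ℤ} λ_u (1 + 2^j |x - 2πu/2^j|)^{-L} ≤ C [ M( ∑_u λ_u^λ χ_{j,u} )(x) ]^{1/λ}, where χ_{j,u} is the indicator of the interval [2πu/2^j, 2π(u+1)/2^j] and M is the Hardy–Littlewood maximal operator, with C independent of j, (λ_u), and x. -/

import Mathlib

open Real MeasureTheory intervalIntegral

/-- The (uncentered-over-symmetric-intervals) Hardy–Littlewood maximal operator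
`M g(x) = sup_{r>0} (1/(2r)) ∫_{x-r}^{x+r} |g|`. -/
noncomputable def hlMax (g : ℝ → ℝ) (x : ℝ) : ℝ :=
  ⨆ r : {r : ℝ // 0 < r}, (1 / (2 * r.1)) * ∫ y in (x - r.1)..(x + r.1), |g y|

lemma kyr_add_rpow_le {x y p : ℝ} (hx : 0 ≤ x) (hy : 0 ≤ y) (hp0 : 0 ≤ p) (hp1 : p ≤ 1) :
    (x + y) ^ p ≤ x ^ p + y ^ p := by
  have h := NNReal.rpow_add_le_add_rpow x.toNNReal y.toNNReal hp0 hp1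
  have h' := NNReal.coe_le_coe.2 h
  push_cast at h'
  rwa [Real.coe_toNNReal _ hx, Real.coe_toNNReal _ hy] at h'

lemma kyr_rpow_sum_le {ι : Type*} (s : Finset ι) (f : ι → ℝ) (hf : ∀ i ∈ s, 0 ≤ f i)
    {p : ℝ} (hp0 : 0 < p) (hp1 : p ≤ 1) :
    (∑ i ∈ s, f i) ^ p ≤ ∑ i ∈ s, f i ^ p := by
  induction s using Finset.cons_induction with
  | empty => simp [Real.zero_rpow hp0.ne']
  | cons a s ha ih =>
    rw [Finset.sum_cons, Finset.sum_cons]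
    have h1 : 0 ≤ f a := hf a (Finset.mem_cons_self _ _)
    have h2 : 0 ≤ ∑ i ∈ s, f i :=
      Finset.sum_nonneg fun i hi => hf i (Finset.mem_cons_of_mem hi)
    calc (f a + ∑ i ∈ s, f i) ^ p ≤ f a ^ p + (∑ i ∈ s, f i) ^ p :=
          kyr_add_rpow_le h1 h2 hp0.le hp1
      _ ≤ _ := by
          have := ih (fun i hi => hf i (Finset.mem_cons_of_mem hi))
          linarith

set_option maxHeartbeats 2000000

theorem kyriazis_maximal_bound (lam L : ℝ) (hlam0 : 0 < lam) (hlam1 : lam ≤ 1)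
    (hL : 1 / lam < L) :
    ∃ C > (0 : ℝ), ∀ (j : ℕ) (c : ℤ → ℝ) (x : ℝ),
      (∀ u : ℤ, 0 ≤ c u) → (Function.support c).Finite →
      (∑' u : ℤ, c u * (1 + 2 ^ j * |x - 2 * Real.pi * u / 2 ^ j|) ^ (-L))
        ≤ C * (hlMax (fun y => ∑' u : ℤ,
              c u ^ lam *
                Set.indicator (Set.Icc (2 * Real.pi * u / 2 ^ j)
                  (2 * Real.pi * (u + 1) / 2 ^ j)) 1 y) x) ^ (1 / lam) := by
  classical
  have hP1 : 1 < L * lam := (div_lt_iff₀ hlam0).1 hL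
  set ρ : ℝ := 2 ^ (1 - L * lam) with hρdef
  have hρ0 : 0 < ρ := Real.rpow_pos_of_pos two_pos _
  have hρ1 : ρ < 1 := Real.rpow_lt_one_of_one_lt_of_neg one_lt_two (by linarith)
  set K : ℝ := 4 * (1 - ρ)⁻¹ with hKdef
  have hK0 : 0 < K := by
    have : 0 < 1 - ρ := by linarith
    positivity
  refine ⟨K ^ (1 / lam), Real.rpow_pos_of_pos hK0 _, ?_⟩
  intro j c x hc hfin
  -- notation
  set t : ℤ → ℝ := fun u => 2 * Real.pi * u / 2 ^ j with ht
  set a : ℤ → ℝ := fun u => 1 + 2 ^ j * |x - t u| with ha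
  have hj0 : (0:ℝ) < 2 ^ j := by positivity
  have ha1 : ∀ u, 1 ≤ a u := by
    intro u
    have : 0 ≤ 2 ^ j * |x - t u| := by positivity
    simp only [ha]; linarith
  have ha0 : ∀ u, 0 < a u := fun u => lt_of_lt_of_le one_pos (ha1 u)
  set h : ℝ := 2 * Real.pi / 2 ^ j with hh
  have hh0 : 0 < h := by positivity
  set s : Finset ℤ := hfin.toFinset with hs
  have hcs : ∀ u, u ∉ s → c u = 0 := by
    intro u hu
    by_contra hne
    exact hu (hfin.mem_toFinset.2 hne)
  set χ : ℤ → ℝ → ℝ := fun u y =>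
    Set.indicator (Set.Icc (2 * Real.pi * u / 2 ^ j) (2 * Real.pi * (u + 1) / 2 ^ j)) 1 y
    with hχ
  have hχ01 : ∀ u y, 0 ≤ χ u y ∧ χ u y ≤ 1 := by
    intro u y
    simp only [hχ]
    constructor
    · exact Set.indicator_nonneg (fun _ _ => zero_le_one) y
    · exact Set.indicator_le_self' (fun _ _ => zero_le_one) y
  set gs : ℝ → ℝ := fun y => ∑ u ∈ s, c u ^ lam * χ u y with hgs
  have hgseq : (fun y => ∑' u : ℤ,
      c u ^ lam *
        Set.indicator (Set.Icc (2 * Real.pi * u / 2 ^ j)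
          (2 * Real.pi * (u + 1) / 2 ^ j)) 1 y) = gs := by
    funext y
    exact tsum_eq_sum (fun u hu => by
      rw [hcs u hu, Real.zero_rpow hlam0.ne', zero_mul])
  rw [hgseq]
  -- pointwise bounds for gs
  have hgs0 : ∀ y, 0 ≤ gs y := by
    intro y
    exact Finset.sum_nonneg fun u _ =>
      mul_nonneg (Real.rpow_nonneg (hc u) _) (hχ01 u y).1
  set Mb : ℝ := ∑ u ∈ s, c u ^ lam with hMb
  have hMb0 : 0 ≤ Mb := Finset.sum_nonneg fun u _ => Real.rpow_nonneg (hc u) _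
  have hgsMb : ∀ y, gs y ≤ Mb := by
    intro y
    exact Finset.sum_le_sum fun u _ => by
      have := (hχ01 u y).2
      have h0 := Real.rpow_nonneg (hc u) lam
      nlinarith
  -- integrability
  have hint : ∀ u : ℤ, Integrable (fun y => c u ^ lam * χ u y) := by
    intro u
    apply Integrable.const_mul
    simp only [hχ]
    rw [integrable_indicator_iff measurableSet_Icc]
    exact integrableOn_const measure_Icc_lt_top.ne
  have hgsint : Integrable gs := integrable_finset_sum s fun u _ => hint u
  -- maximal function facts
  set Mx : ℝ := hlMax gs x with hMx
  have havg_le : ∀ r : {r : ℝ // 0 < r},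
      (1 / (2 * r.1)) * ∫ y in (x - r.1)..(x + r.1), |gs y| ≤ Mb := by
    rintro ⟨r, hr⟩
    have hle : x - r ≤ x + r := by linarith
    have h1 : (∫ y in (x - r)..(x + r), |gs y|) ≤ ∫ _ in (x - r)..(x + r), Mb := by
      apply intervalIntegral.integral_mono_on hle hgsint.abs.intervalIntegrable
        intervalIntegrable_const
      intro y _
      rw [abs_of_nonneg (hgs0 y)]
      exact hgsMb y
    rw [intervalIntegral.integral_const, smul_eq_mul] at h1
    have heq : (x + r - (x - r)) = 2 * r := by ring
    rw [heq] at h1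
    calc (1 / (2 * r)) * ∫ y in (x - r)..(x + r), |gs y|
        ≤ (1 / (2 * r)) * (2 * r * Mb) := by
          apply mul_le_mul_of_nonneg_left h1
          positivity
      _ = Mb := by field_simp
  have hbdd : BddAbove (Set.range fun r : {r : ℝ // 0 < r} =>
      (1 / (2 * r.1)) * ∫ y in (x - r.1)..(x + r.1), |gs y|) := by
    refine ⟨Mb, ?_⟩
    rintro _ ⟨r, rfl⟩
    exact havg_le r
  have hMge : ∀ r : {r : ℝ // 0 < r},
      (1 / (2 * r.1)) * ∫ y in (x - r.1)..(x + r.1), |gs y| ≤ Mx :=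
    fun r => le_ciSup hbdd r
  have hM0 : 0 ≤ Mx := by
    refine le_trans ?_ (hMge ⟨1, one_pos⟩)
    have : (0:ℝ) ≤ ∫ y in (x - 1)..(x + 1), |gs y| :=
      intervalIntegral.integral_nonneg (by linarith) (fun y _ => abs_nonneg _)
    positivity
  -- key block estimate
  have key : ∀ A : ℝ, 1 ≤ A →
      (∑ u ∈ s.filter (fun u => a u ≤ A), c u ^ lam) ≤ 2 * A * Mx := by
    intro A hA
    set r : ℝ := A * h with hrdef
    have hr0 : 0 < r := by positivity
    have hle : x - r ≤ x + r := by linarith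
    set T : Finset ℤ := s.filter (fun u => a u ≤ A) with hT
    -- intervals in T live inside [x-r, x+r]
    have hsub : ∀ u ∈ T, x - r ≤ t u ∧ t u + h ≤ x + r := by
      intro u hu
      have hua : a u ≤ A := by
        have := (Finset.mem_filter.1 hu).2
        exact this
      have habs : |x - t u| ≤ (A - 1) / 2 ^ j := by
        have h2 : 2 ^ j * |x - t u| ≤ A - 1 := by
          simp only [ha] at hua; linarith
        rw [le_div_iff₀ hj0]; linarith
      have hpi : (1:ℝ) ≤ 2 * Real.pi := by
        have := Real.pi_gt_three; linarith
      have hd : (A - 1) / 2 ^ j ≤ (A - 1) * h := by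
        rw [div_le_iff₀ hj0, hh]
        have heq : (A - 1) * (2 * Real.pi / 2 ^ j) * 2 ^ j = (A - 1) * (2 * Real.pi) := by
          field_simp
        rw [heq]
        nlinarith [sub_nonneg.2 hA]
      have hab := abs_le.1 habs
      constructor
      · have h2 : x - t u ≤ (A - 1) * h := le_trans hab.2 hd
        simp only [hrdef]; nlinarith
      · have h3 : -((A - 1) * h) ≤ x - t u := le_trans (by linarith) hab.1
        simp only [hrdef]; nlinarith
    have hχint : ∀ u : ℤ, IntervalIntegrable (χ u) volume (x - r) (x + r) := by
      intro u
      have : Integrable (χ u) := by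
        simp only [hχ]
        rw [integrable_indicator_iff measurableSet_Icc]
        exact integrableOn_const measure_Icc_lt_top.ne
      exact this.intervalIntegrable
    have hend : ∀ u : ℤ, 2 * Real.pi * ((u:ℝ) + 1) / 2 ^ j = t u + h := by
      intro u; simp only [ht, hh]; ring
    have hχlow : ∀ u ∈ T, h ≤ ∫ y in (x - r)..(x + r), χ u y := by
      intro u hu
      have hAB : t u ≤ t u + h := by linarith
      have hx1 : x - r ≤ t u := (hsub u hu).1
      have hx2 : t u + h ≤ x + r := (hsub u hu).2
      have hone : (∫ y in (t u)..(t u + h), χ u y) = h := by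
        have hEq : Set.EqOn (χ u) (fun _ => (1:ℝ)) (Set.uIcc (t u) (t u + h)) := by
          intro y hy
          rw [Set.uIcc_of_le hAB] at hy
          simp only [hχ]
          rw [hend u]
          exact Set.indicator_of_mem hy 1
        rw [intervalIntegral.integral_congr hEq]
        simp
      calc h = ∫ y in (t u)..(t u + h), χ u y := hone.symm
        _ ≤ ∫ y in (x - r)..(x + r), χ u y := by
            apply intervalIntegral.integral_mono_interval hx1 hAB hx2
            · exact Filter.Eventually.of_forall (fun y => (hχ01 u y).1)
            · exact hχint u
    have hsumint : IntervalIntegrable (fun y => ∑ u ∈ T, c u ^ lam * χ u y)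
        volume (x - r) (x + r) :=
      (integrable_finset_sum T fun u _ => hint u).intervalIntegrable
    have step : (∑ u ∈ T, c u ^ lam) * h ≤ 2 * r * Mx := by
      have c1 : (∑ u ∈ T, c u ^ lam) * h = ∑ u ∈ T, c u ^ lam * h := Finset.sum_mul ..
      have c2 : (∑ u ∈ T, c u ^ lam * h)
          ≤ ∑ u ∈ T, c u ^ lam * ∫ y in (x - r)..(x + r), χ u y :=
        Finset.sum_le_sum fun u hu =>
          mul_le_mul_of_nonneg_left (hχlow u hu) (Real.rpow_nonneg (hc u) _)
      have c3 : (∑ u ∈ T, c u ^ lam * ∫ y in (x - r)..(x + r), χ u y)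
          = ∫ y in (x - r)..(x + r), ∑ u ∈ T, c u ^ lam * χ u y := by
        rw [intervalIntegral.integral_finset_sum (fun (u : ℤ) (_ : u ∈ T) =>
          (hint u).intervalIntegrable)]
        exact Finset.sum_congr rfl fun u _ => (intervalIntegral.integral_const_mul _ _).symm
      have c4 : (∫ y in (x - r)..(x + r), ∑ u ∈ T, c u ^ lam * χ u y)
          ≤ ∫ y in (x - r)..(x + r), |gs y| := by
        apply intervalIntegral.integral_mono_on hle hsumint hgsint.abs.intervalIntegrable
        intro y _
        rw [abs_of_nonneg (hgs0 y)]
        apply Finset.sum_le_sum_of_subset_of_nonneg (Finset.filter_subset _ _)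
        intro u _ _
        exact mul_nonneg (Real.rpow_nonneg (hc u) _) (hχ01 u y).1
      have c5 : (∫ y in (x - r)..(x + r), |gs y|) ≤ 2 * r * Mx := by
        have h5 := hMge ⟨r, hr0⟩
        simp only at h5
        have h2r : (0:ℝ) < 2 * r := by linarith
        calc (∫ y in (x - r)..(x + r), |gs y|)
            = (2 * r) * ((1 / (2 * r)) * ∫ y in (x - r)..(x + r), |gs y|) := by
              field_simp
          _ ≤ (2 * r) * Mx := mul_le_mul_of_nonneg_left h5 h2r.le
          _ = 2 * r * Mx := by ring
      calc (∑ u ∈ T, c u ^ lam) * h = ∑ u ∈ T, c u ^ lam * h := c1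
        _ ≤ _ := c2
        _ = _ := c3
        _ ≤ _ := c4
        _ ≤ _ := c5
    have : (∑ u ∈ T, c u ^ lam) * h ≤ (2 * A * Mx) * h := by
      rw [hrdef] at step
      calc (∑ u ∈ T, c u ^ lam) * h ≤ 2 * (A * h) * Mx := step
        _ = (2 * A * Mx) * h := by ring
    exact le_of_mul_le_mul_right this hh0
  -- dyadic decomposition
  set m : ℤ → ℕ := fun u => Nat.floor (Real.logb 2 (a u)) with hm
  have hm1 : ∀ u, (2:ℝ) ^ ((m u : ℝ)) ≤ a u := by
    intro u
    have hlog0 : 0 ≤ Real.logb 2 (a u) := Real.logb_nonneg one_lt_two (ha1 u)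
    have h1 : (m u : ℝ) ≤ Real.logb 2 (a u) := Nat.floor_le hlog0
    calc (2:ℝ) ^ ((m u : ℝ)) ≤ 2 ^ Real.logb 2 (a u) :=
          Real.rpow_le_rpow_of_exponent_le one_le_two h1
      _ = a u := Real.rpow_logb two_pos (by norm_num) (ha0 u)
  have hm2 : ∀ u, a u ≤ 2 ^ ((m u : ℝ) + 1) := by
    intro u
    have h1 : Real.logb 2 (a u) ≤ (m u : ℝ) + 1 := (Nat.lt_floor_add_one _).le
    calc a u = 2 ^ Real.logb 2 (a u) := (Real.rpow_logb two_pos (by norm_num) (ha0 u)).symm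
      _ ≤ 2 ^ ((m u : ℝ) + 1) := Real.rpow_le_rpow_of_exponent_le one_le_two h1
  -- rewrite LHS as a finite sum
  have hLHS : (∑' u : ℤ, c u * (1 + 2 ^ j * |x - 2 * Real.pi * u / 2 ^ j|) ^ (-L))
      = ∑ u ∈ s, c u * (a u) ^ (-L) := by
    rw [tsum_eq_sum (s := s) (fun u hu => by rw [hcs u hu, zero_mul])]
  rw [hLHS]
  set S : ℝ := ∑ u ∈ s, c u * (a u) ^ (-L) with hS
  have hS0 : 0 ≤ S :=
    Finset.sum_nonneg fun u _ => mul_nonneg (hc u) (Real.rpow_nonneg (ha0 u).le _)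
  have hSlam : S ^ lam ≤ ∑ u ∈ s, c u ^ lam * (a u) ^ (-(L * lam)) := by
    calc S ^ lam ≤ ∑ u ∈ s, (c u * (a u) ^ (-L)) ^ lam :=
          kyr_rpow_sum_le s _ (fun u _ =>
            mul_nonneg (hc u) (Real.rpow_nonneg (ha0 u).le _)) hlam0 hlam1
      _ = ∑ u ∈ s, c u ^ lam * (a u) ^ (-(L * lam)) := by
          refine Finset.sum_congr rfl fun u _ => ?_
          rw [Real.mul_rpow (hc u) (Real.rpow_nonneg (ha0 u).le _),
            ← Real.rpow_mul (ha0 u).le, neg_mul]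
  -- fiberwise estimate
  set tset : Finset ℕ := s.image m with htset
  have hfib : (∑ u ∈ s, c u ^ lam * (a u) ^ (-(L * lam)))
      = ∑ k ∈ tset, ∑ u ∈ s.filter (fun u => m u = k), c u ^ lam * (a u) ^ (-(L * lam)) :=
    (Finset.sum_fiberwise_of_maps_to (fun u hu => Finset.mem_image_of_mem m hu) _).symm
  have hfibk : ∀ k ∈ tset,
      (∑ u ∈ s.filter (fun u => m u = k), c u ^ lam * (a u) ^ (-(L * lam)))
        ≤ 4 * Mx * ρ ^ k := by
    intro k _
    have e2k : (0:ℝ) < 2 ^ ((k:ℝ)) := Real.rpow_pos_of_pos two_pos _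
    have step1 : (∑ u ∈ s.filter (fun u => m u = k), c u ^ lam * (a u) ^ (-(L * lam)))
        ≤ (2:ℝ) ^ (-((k:ℝ) * (L * lam))) * ∑ u ∈ s.filter (fun u => m u = k), c u ^ lam := by
      rw [Finset.mul_sum]
      refine Finset.sum_le_sum fun u hu => ?_
      have hmu : m u = k := (Finset.mem_filter.1 hu).2
      have h1 : (a u) ^ (-(L * lam)) ≤ ((2:ℝ) ^ ((k:ℝ))) ^ (-(L * lam)) := by
        apply Real.rpow_le_rpow_of_nonpos e2k _ (by nlinarith)
        rw [← hmu]; exact hm1 u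
      have h2 : ((2:ℝ) ^ ((k:ℝ))) ^ (-(L * lam)) = (2:ℝ) ^ (-((k:ℝ) * (L * lam))) := by
        rw [← Real.rpow_mul (by norm_num : (0:ℝ) ≤ 2)]
        congr 1
        ring
      rw [← h2, mul_comm (((2:ℝ) ^ ((k:ℝ))) ^ (-(L * lam))) _]
      exact mul_le_mul_of_nonneg_left h1 (Real.rpow_nonneg (hc u) _)
    have step2 : (∑ u ∈ s.filter (fun u => m u = k), c u ^ lam)
        ≤ ∑ u ∈ s.filter (fun u => a u ≤ (2:ℝ) ^ ((k:ℝ) + 1)), c u ^ lam := by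
      apply Finset.sum_le_sum_of_subset_of_nonneg
      · intro u hu
        rw [Finset.mem_filter] at hu ⊢
        exact ⟨hu.1, by rw [← hu.2]; exact hm2 u⟩
      · intro u _ _
        exact Real.rpow_nonneg (hc u) _
    have step3 : (∑ u ∈ s.filter (fun u => a u ≤ (2:ℝ) ^ ((k:ℝ) + 1)), c u ^ lam)
        ≤ 2 * (2:ℝ) ^ ((k:ℝ) + 1) * Mx := by
      apply key
      have : (2:ℝ) ^ (0:ℝ) ≤ (2:ℝ) ^ ((k:ℝ) + 1) :=
        Real.rpow_le_rpow_of_exponent_le one_le_two (by positivity)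
      simpa using this
    have e1 : (2:ℝ) ^ ((k:ℝ) + 1) = 2 ^ ((k:ℝ)) * 2 := by
      rw [Real.rpow_add two_pos, Real.rpow_one]
    have e2 : (2:ℝ) ^ (-((k:ℝ) * (L * lam))) * 2 ^ ((k:ℝ))
        = 2 ^ ((1 - L * lam) * (k:ℝ)) := by
      rw [← Real.rpow_add two_pos]
      congr 1
      ring
    have eρ : ρ ^ k = (2:ℝ) ^ ((1 - L * lam) * (k:ℝ)) := by
      rw [hρdef, ← Real.rpow_natCast ((2:ℝ) ^ (1 - L * lam)) k,
        ← Real.rpow_mul (by norm_num : (0:ℝ) ≤ 2)]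
    have hmono : (2:ℝ) ^ (-((k:ℝ) * (L * lam)))
        * (∑ u ∈ s.filter (fun u => m u = k), c u ^ lam)
        ≤ (2:ℝ) ^ (-((k:ℝ) * (L * lam))) * (2 * (2:ℝ) ^ ((k:ℝ) + 1) * Mx) := by
      apply mul_le_mul_of_nonneg_left (le_trans step2 step3)
        (Real.rpow_nonneg (by norm_num) _)
    have heq : (2:ℝ) ^ (-((k:ℝ) * (L * lam))) * (2 * (2:ℝ) ^ ((k:ℝ) + 1) * Mx)
        = 4 * Mx * ρ ^ k := by
      rw [eρ, ← e2, e1]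
      ring
    calc (∑ u ∈ s.filter (fun u => m u = k), c u ^ lam * (a u) ^ (-(L * lam)))
        ≤ _ := step1
      _ ≤ _ := hmono
      _ = 4 * Mx * ρ ^ k := heq
  have hgeo : (∑ k ∈ tset, ρ ^ k) ≤ (1 - ρ)⁻¹ := by
    have hsum : Summable (fun k : ℕ => ρ ^ k) := summable_geometric_of_lt_one hρ0.le hρ1
    calc (∑ k ∈ tset, ρ ^ k) ≤ ∑' k : ℕ, ρ ^ k :=
          Summable.sum_le_tsum tset (fun k _ => pow_nonneg hρ0.le k) hsum
      _ = (1 - ρ)⁻¹ := tsum_geometric_of_lt_one hρ0.le hρ1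
  have hfinal : S ^ lam ≤ K * Mx := by
    calc S ^ lam ≤ ∑ u ∈ s, c u ^ lam * (a u) ^ (-(L * lam)) := hSlam
      _ = ∑ k ∈ tset, ∑ u ∈ s.filter (fun u => m u = k), c u ^ lam * (a u) ^ (-(L * lam)) :=
          hfib
      _ ≤ ∑ k ∈ tset, 4 * Mx * ρ ^ k := Finset.sum_le_sum hfibk
      _ = 4 * Mx * ∑ k ∈ tset, ρ ^ k := by rw [Finset.mul_sum]
      _ ≤ 4 * Mx * (1 - ρ)⁻¹ := by
          apply mul_le_mul_of_nonneg_left hgeo (by positivity)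
      _ = K * Mx := by rw [hKdef]; ring
  calc S = (S ^ lam) ^ (1 / lam) := by
        rw [← Real.rpow_mul hS0, mul_one_div_cancel hlam0.ne', Real.rpow_one]
    _ ≤ (K * Mx) ^ (1 / lam) :=
        Real.rpow_le_rpow (Real.rpow_nonneg hS0 _) hfinal
          (le_of_lt (by rw [one_div]; exact inv_pos.2 hlam0))
    _ = K ^ (1 / lam) * Mx ^ (1 / lam) := Real.mul_rpow hK0.le hM0
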